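/- Let F be a field, let c, r ∈ F with c ≠ 0, set b = c·r, and let W be the Tate normal form E(b,c): y² + (1−c)xy − by = x³ − bx². If the discriminant Δ of W is nonzero, then for P = (0,0) one has 4•P = (r(r−1), r²(c − r + 1)). -/

import Mathlib

open WeierstrassCurve.Affine WeierstrassCurve.Affine.Point in
lemma tate_some_congr {F : Type*} [Field F] {W : WeierstrassCurve.Affine F}
    {x₁ y₁ x₂ y₂ : F} (hx : x₁ = x₂) (hy : y₁ = y₂) (h₁ : W.Nonsingular x₁ y₁)
    (h₂ : W.Nonsingular x₂ y₂) : some _ _ h₁ = some _ _ h₂ := by subst hx hy; rfl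

open Classical in
/-- For a field `F`, `c, r ∈ F` with `c ≠ 0`, set `b = c * r`, and let `W` be
the Tate normal form `E(b,c) : y² + (1-c)xy - by = x³ - bx²`. If the discriminant `Δ` of `W` is
nonzero, then for `P = (0,0)` one has `4 • P = (r(r-1), r²(c - r + 1))`. -/
theorem tate_normal_form_four_smul (F : Type*) [Field F] (c r : F) (hc : c ≠ 0)
    (b : F) (hb : b = c * r)
    (W : WeierstrassCurve.Affine F)
    (hW : W = { a₁ := 1 - c, a₂ := -b, a₃ := -b, a₄ := 0, a₆ := 0 })
    (hΔ : W.Δ ≠ 0) :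
    ∃ (h : W.Nonsingular 0 0) (h4 : W.Nonsingular (r * (r - 1)) (r ^ 2 * (c - r + 1))),
      (4 : ℤ) • (WeierstrassCurve.Affine.Point.some _ _ h) =
        WeierstrassCurve.Affine.Point.some _ _ h4 := by
  open WeierstrassCurve.Affine WeierstrassCurve.Affine.Point in
  subst hb hW
  set W : WeierstrassCurve.Affine F :=
    { a₁ := 1 - c, a₂ := -(c * r), a₃ := -(c * r), a₄ := 0, a₆ := 0 } with hWdef
  have hb0 : c * r ≠ 0 := by
    intro h
    apply hΔ
    simp only [WeierstrassCurve.Δ, WeierstrassCurve.b₂, WeierstrassCurve.b₄,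
      WeierstrassCurve.b₆, WeierstrassCurve.b₈, hWdef, h]
    ring
  have hr : r ≠ 0 := right_ne_zero_of_mul hb0
  have h0 : W.Nonsingular 0 0 :=
    (W.equation_iff_nonsingular_of_Δ_ne_zero hΔ).mp (by rw [equation_iff]; ring)
  have h2 : W.Nonsingular (c * r) (c * r * c) :=
    (W.equation_iff_nonsingular_of_Δ_ne_zero hΔ).mp (by rw [equation_iff]; ring)
  have h4 : W.Nonsingular (r * (r - 1)) (r ^ 2 * (c - r + 1)) :=
    (W.equation_iff_nonsingular_of_Δ_ne_zero hΔ).mp (by rw [equation_iff]; ring)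
  have hneg0 : W.negY 0 0 = c * r := by simp [negY, hWdef]
  have hneg2 : W.negY (c * r) (c * r * c) = 0 := by simp only [negY, hWdef]; ring
  have hne0 : (0 : F) ≠ W.negY 0 0 := by rw [hneg0]; exact fun h => hb0 h.symm
  have hne2 : c * r * c ≠ W.negY (c * r) (c * r * c) := by
    rw [hneg2]; exact mul_ne_zero hb0 hc
  have hs0 : W.slope 0 0 0 0 = 0 := by
    rw [slope_of_Y_ne rfl hne0]
    simp [hWdef]
  have hs2 : W.slope (c * r) (c * r) (c * r * c) (c * r * c) = c + r - 1 := by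
    rw [slope_of_Y_ne rfl hne2, hneg2, sub_zero,
      div_eq_iff (mul_ne_zero hb0 hc)]
    simp only [hWdef]
    ring
  have key2 : Point.some _ _ h0 + Point.some _ _ h0 = Point.some _ _ h2 := by
    rw [Point.add_self_of_Y_ne hne0]
    refine tate_some_congr ?_ ?_ _ _
    · rw [hs0]; simp only [addX, hWdef]; ring
    · rw [hs0]; simp only [addY, negAddY, addX, negY, hWdef]; ring
  have key4 : Point.some _ _ h2 + Point.some _ _ h2 = Point.some _ _ h4 := by
    rw [Point.add_self_of_Y_ne hne2]
    refine tate_some_congr ?_ ?_ _ _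
    · rw [hs2]; simp only [addX, hWdef]; ring
    · rw [hs2]; simp only [addY, negAddY, addX, negY, hWdef]; ring
  refine ⟨h0, h4, ?_⟩
  rw [show (4 : ℤ) = 2 + 2 from rfl, add_smul, two_zsmul, key2, key4]
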